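/- Chain rule II: for any subnormalized positive semidefinite operator ρ_AB on H_A ⊗ H_B, H_min(AB)_ρ − H_{−∞}(B)_ρ ≤ H_min(A|B)_{ρ|ρ}; concretely, if ρ_AB ≤ μ · 1_{AB} (so μ ≥ ‖ρ_AB‖∞) and ρ_B ≥ ν · Π_{supp(ρ_B)} with ν > 0 the smallest nonzero eigenvalue of ρ_B, then ρ_AB ≤ (μ/ν) · 1_A ⊗ ρ_B. -/

import Mathlib

open Matrix
open scoped Kronecker ComplexOrder Classical

noncomputable section

variable {α β : Type*} [Fintype α] [DecidableEq α] [Fintype β] [DecidableEq β]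

/-- partial trace over the first tensor factor. -/
def ptrFst (ρ : Matrix (α × β) (α × β) ℂ) : Matrix β β ℂ :=
  fun p q => ∑ i, ρ (i, p) (i, q)

lemma kron_conjTranspose (A : Matrix α α ℂ) (B : Matrix β β ℂ) :
    (A ⊗ₖ B)ᴴ = Aᴴ ⊗ₖ Bᴴ := by
  ext ⟨i, p⟩ ⟨j, q⟩
  simp [conjTranspose_apply, kroneckerMap_apply, star_mul']

lemma one_kron_posSemidef {M : Matrix β β ℂ} (hM : M.PosSemidef) :
    ((1 : Matrix α α ℂ) ⊗ₖ M).PosSemidef := by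
  obtain ⟨B, hB⟩ : ∃ B : Matrix β β ℂ, M = Bᴴ * B := by
    open scoped MatrixOrder in
    exact CStarAlgebra.nonneg_iff_eq_star_mul_self.mp hM.nonneg
  have h : (1 : Matrix α α ℂ) ⊗ₖ M
      = ((1 : Matrix α α ℂ) ⊗ₖ B)ᴴ * ((1 : Matrix α α ℂ) ⊗ₖ B) := by
    rw [kron_conjTranspose, conjTranspose_one, ← mul_kronecker_mul, one_mul, ← hB]
  rw [h]
  exact posSemidef_conjTranspose_mul_self _

lemma posSemidef_real_smul {γ : Type*} [Fintype γ] {M : Matrix γ γ ℂ}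
    (hM : M.PosSemidef) {c : ℝ} (hc : 0 ≤ c) : (((c : ℂ)) • M).PosSemidef := by
  refine PosSemidef.of_dotProduct_mulVec_nonneg ?_ ?_
  · show (((c : ℂ)) • M)ᴴ = _
    rw [conjTranspose_smul, hM.1.eq, Complex.star_def, Complex.conj_ofReal]
  · intro x
    rw [smul_mulVec, dotProduct_smul, smul_eq_mul]
    exact mul_nonneg (by exact_mod_cast hc) (hM.dotProduct_mulVec_nonneg x)

lemma slice_ker (ρ : Matrix (α × β) (α × β) ℂ) (hρ : ρ.PosSemidef)
    (v : β → ℂ) (hv : ptrFst ρ *ᵥ v = 0) (i : α) :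
    ρ *ᵥ (fun jq => if jq.1 = i then v jq.2 else 0) = 0 := by
  set u : α → (α × β) → ℂ := fun i jq => if jq.1 = i then v jq.2 else 0 with hu
  have hsum : ∑ i, star (u i) ⬝ᵥ ρ *ᵥ (u i) = 0 := by
    have hterm : ∀ j : α, star (u j) ⬝ᵥ ρ *ᵥ (u j)
        = ∑ p, ∑ q, star (v p) * (ρ (j, p) (j, q) * v q) := by
      intro j
      simp only [hu, dotProduct, mulVec, Fintype.sum_prod_type, Pi.star_apply]
      rw [Finset.sum_eq_single j]
      · refine Finset.sum_congr rfl fun p _ => ?_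
        rw [Finset.sum_eq_single j]
        · rw [Finset.mul_sum]
          refine Finset.sum_congr rfl fun q _ => by simp
        · intro k _ hk
          apply Finset.sum_eq_zero; intro q _; simp [hk]
        · intro h; exact absurd (Finset.mem_univ j) h
      · intro b _ hb
        apply Finset.sum_eq_zero; intro p _; simp [hb]
      · intro h; exact absurd (Finset.mem_univ j) h
    have h : ∑ i, star (u i) ⬝ᵥ ρ *ᵥ (u i) = star v ⬝ᵥ (ptrFst ρ *ᵥ v) := by
      simp only [hterm]
      rw [Finset.sum_comm]
      simp only [dotProduct, mulVec, ptrFst, Pi.star_apply, Finset.mul_sum, Finset.sum_mul]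
      refine Finset.sum_congr rfl fun p _ => ?_
      rw [Finset.sum_comm]
    rw [h, hv, dotProduct_zero]
  have hnn : ∀ j ∈ Finset.univ, (0 : ℂ) ≤ star (u j) ⬝ᵥ ρ *ᵥ (u j) := fun j _ => hρ.dotProduct_mulVec_nonneg _
  have h0 := (Finset.sum_eq_zero_iff_of_nonneg hnn).mp hsum i (Finset.mem_univ i)
  exact (hρ.dotProduct_mulVec_zero_iff _).mp h0

/-- Chain rule II: for a subnormalized `ρ_AB`, if `ρ_AB ≤ μ·1_{AB}` and
`ρ_B ≥ ν·Π_{supp(ρ_B)}` with `ν > 0` (where `P` is the orthogonal projector onto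
the support of `ρ_B`), then `ρ_AB ≤ (μ/ν)·(1_A ⊗ ρ_B)`; in entropy form,
`H_min(AB)_ρ − H_{−∞}(B)_ρ ≤ H_min(A|B)_{ρ|ρ}`. -/
theorem Hmin_chain_rule_II
    (ρ : Matrix (α × β) (α × β) ℂ) (hρ : ρ.PosSemidef) (hρtr : ρ.trace.re ≤ 1)
    (μ ν : ℝ) (hν : 0 < ν)
    (hμ : (((μ : ℂ) • (1 : Matrix (α × β) (α × β) ℂ)) - ρ).PosSemidef)
    (P : Matrix β β ℂ) (hPH : P.IsHermitian) (hPproj : P * P = P)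
    (hPsupp : ∀ v : β → ℂ, (ptrFst ρ) *ᵥ v = 0 ↔ P *ᵥ v = 0)
    (hlow : (ptrFst ρ - ((ν : ℂ) • P)).PosSemidef) :
    ((((μ / ν : ℝ) : ℂ) • ((1 : Matrix α α ℂ) ⊗ₖ ptrFst ρ)) - ρ).PosSemidef := by
  by_cases hne : Nonempty (α × β)
  · -- nonempty case
    -- μ is nonnegative
    have hμ1 : ((μ : ℂ) • (1 : Matrix (α × β) (α × β) ℂ)).PosSemidef := by
      have := hμ.add hρ
      simpa using this
    have hμ0 : 0 ≤ μ := by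
      obtain ⟨a⟩ := hne
      rw [smul_one_eq_diagonal] at hμ1
      have := posSemidef_diagonal_iff.mp hμ1 a
      exact_mod_cast this
    set Q : Matrix (α × β) (α × β) ℂ := (1 : Matrix α α ℂ) ⊗ₖ P with hQ
    have hQH : Qᴴ = Q := by
      rw [hQ, kron_conjTranspose, conjTranspose_one, hPH.eq]
    have hQQ : Q * Q = Q := by
      rw [hQ, ← mul_kronecker_mul, one_mul, hPproj]
    -- ρ * Q = ρ
    have hcol : ∀ x : (α × β) → ℂ, ρ *ᵥ (((1 : Matrix (α × β) (α × β) ℂ) - Q) *ᵥ x) = 0 := by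
      intro x
      set w : (α × β) → ℂ := ((1 : Matrix (α × β) (α × β) ℂ) - Q) *ᵥ x with hw
      have hwslice : ∀ i : α, (fun q => w (i, q)) = (fun q => x (i, q)) - P *ᵥ (fun q => x (i, q)) := by
        intro i
        funext q
        simp only [hw, sub_mulVec, one_mulVec, Pi.sub_apply]
        congr 1
        simp only [hQ, mulVec, dotProduct, Fintype.sum_prod_type, kroneckerMap_apply,
          one_apply, ite_mul, zero_mul, one_mul]
        rw [Finset.sum_comm]
        simp [Finset.sum_ite_eq]
      have hker : ∀ i : α, ptrFst ρ *ᵥ (fun q => w (i, q)) = 0 := by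
        intro i
        apply (hPsupp _).mpr
        rw [hwslice i]
        rw [mulVec_sub, mulVec_mulVec, hPproj, sub_self]
      have hdecomp : w = ∑ i : α, (fun jq : α × β => if jq.1 = i then w (i, jq.2) else 0) := by
        funext jq
        rw [Finset.sum_apply]
        rw [Finset.sum_ite_eq (Finset.univ : Finset α) jq.1 (fun i => w (i, jq.2))]
        simp
      calc ρ *ᵥ w = ρ *ᵥ ∑ i : α, (fun jq : α × β => if jq.1 = i then w (i, jq.2) else 0) := by
            rw [← hdecomp]
        _ = ∑ i : α, ρ *ᵥ (fun jq : α × β => if jq.1 = i then w (i, jq.2) else 0) := by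
            rw [← mulVecLin_apply, map_sum]
            simp [mulVecLin_apply]
        _ = 0 := by
            refine Finset.sum_eq_zero fun i _ => ?_
            exact slice_ker ρ hρ (fun q => w (i, q)) (hker i) i
    have hρQ : ρ * Q = ρ := by
      have h0 : ρ * ((1 : Matrix (α × β) (α × β) ℂ) - Q) = 0 := by
        ext i j
        have := congrFun (hcol (Pi.single j 1)) i
        rw [mulVec_mulVec] at this
        simpa [mulVec_single] using this
      rw [mul_sub, mul_one, sub_eq_zero] at h0
      exact h0.symm
    have hQρ : Q * ρ = ρ := by
      calc Q * ρ = (ρᴴ * Qᴴ)ᴴ := by rw [conjTranspose_mul, conjTranspose_conjTranspose,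
            conjTranspose_conjTranspose]
        _ = (ρ * Q)ᴴ := by rw [hρ.1.eq, hQH]
        _ = ρ := by rw [hρQ, hρ.1.eq]
    have hQρQ : Q * ρ * Q = ρ := by rw [hQρ, hρQ]
    have hQ1Q : Q * ((μ : ℂ) • (1 : Matrix (α × β) (α × β) ℂ)) * Q = (μ : ℂ) • Q := by
      rw [Matrix.mul_smul, mul_one, Matrix.smul_mul, hQQ]
    have e1 : (1 : Matrix α α ℂ) ⊗ₖ (ptrFst ρ - (ν : ℂ) • P)
        = (1 : Matrix α α ℂ) ⊗ₖ ptrFst ρ - (ν : ℂ) • Q := by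
      ext ⟨i, p⟩ ⟨j, q⟩
      simp only [hQ, kroneckerMap_apply, Matrix.sub_apply, Matrix.smul_apply, smul_eq_mul]
      ring
    have hc : ((μ / ν : ℝ) : ℂ) * (ν : ℂ) = (μ : ℂ) := by
      rw [← Complex.ofReal_mul, div_mul_cancel₀ _ hν.ne']
    have hid : ((((μ / ν : ℝ) : ℂ) • ((1 : Matrix α α ℂ) ⊗ₖ ptrFst ρ)) - ρ)
        = ((μ / ν : ℝ) : ℂ) • ((1 : Matrix α α ℂ) ⊗ₖ (ptrFst ρ - (ν : ℂ) • P))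
          + Q * (((μ : ℂ) • (1 : Matrix (α × β) (α × β) ℂ)) - ρ) * Qᴴ := by
      rw [hQH, mul_sub, sub_mul, hQρQ, hQ1Q, e1, smul_sub, smul_smul, hc]
      abel
    rw [hid]
    exact (posSemidef_real_smul (one_kron_posSemidef hlow) (div_nonneg hμ0 hν.le)).add
      (hμ.mul_mul_conjTranspose_same Q)
  · -- empty case
    have hE : IsEmpty (α × β) := not_nonempty_iff.mp hne
    constructor
    · ext i j
      exact hE.elim i
    · intro x
      simp [Finsupp.sum, Finset.eq_empty_of_isEmpty]
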